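/- Let X and Y be real Hilbert spaces, B a densely defined linear operator from X to Y with dense domain W, and B† its adjoint. Let C : Y → Y be a bounded self-adjoint linear operator with 0 ≤ ⟪C y, y⟫ ≤ λ_max ‖y‖² for all y ∈ Y, and let c ≥ 0. Suppose φ ∈ W and F ∈ X satisfy ⟪C(Bφ), Bψ⟫_Y = ⟪F, ψ⟫_X for all ψ ∈ W, together with the stability bound ‖φ‖_X ≤ c ‖F‖_X. Then Φ := −C(Bφ) belongs to dom B† and satisfies ‖Φ‖_Y² + ‖B†Φ‖_X² ≤ (1 + λ_max c) ‖F‖_X². (This is the stability estimate (3.12) in the proof of the paper's Theorem 3.2.) -/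

import Mathlib

open RealInnerProductSpace

/-- Cauchy–Schwarz for the semi-inner product induced by a positive symmetric operator. -/
lemma cs_pos_op {Y : Type*} [NormedAddCommGroup Y] [InnerProductSpace ℝ Y]
    (C : Y →L[ℝ] Y) (hsa : ∀ x y : Y, ⟪C x, y⟫ = ⟪x, C y⟫)
    (hpos : ∀ y : Y, 0 ≤ ⟪C y, y⟫) (a b : Y) :
    ⟪C a, b⟫ ^ 2 ≤ ⟪C a, a⟫ * ⟪C b, b⟫ := by
  have h : ∀ t : ℝ, 0 ≤ ⟪C b, b⟫ * (t * t) + (2 * ⟪C a, b⟫) * t + ⟪C a, a⟫ := by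
    intro t
    have h0 := hpos (a + t • b)
    have hba : ⟪C b, a⟫ = ⟪C a, b⟫ := by
      rw [hsa b a, real_inner_comm]
    simp only [map_add, map_smul, inner_add_left, inner_add_right, inner_smul_left,
      inner_smul_right, RCLike.ofReal_real_eq_id, id_eq, conj_trivial] at h0
    rw [hba] at h0
    nlinarith [h0]
  have hd := discrim_le_zero h
  rw [discrim] at hd
  nlinarith [hd]

/-- The stability estimate (3.12) in the proof of the paper's Theorem 3.2:
if `φ ∈ W` solves the displacement-based problem for `F` with stability `‖φ‖ ≤ c‖F‖`,
then `Φ = −C(Bφ)` lies in the domain of the adjoint `B†` and its graph norm squared is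
bounded by `(1 + λ_max c)‖F‖²`. `W` is the dense domain of the densely defined operator
`B : W → Y`, `domA` is the domain of `B†` (characterized by `hdom`), and `Badj`
realizes `B†` (characterized by `hadj`). -/
theorem stmt6
    {X Y : Type*} [NormedAddCommGroup X] [InnerProductSpace ℝ X] [CompleteSpace X]
    [NormedAddCommGroup Y] [InnerProductSpace ℝ Y] [CompleteSpace Y]
    (W : Submodule ℝ X) (hW : Dense (W : Set X))
    (B : W →ₗ[ℝ] Y) (domA : Set Y) (Badj : Y → X)
    (hdom : ∀ Φ : Y, Φ ∈ domA ↔ ∃ G : X, ∀ ψ : W, ⟪B ψ, Φ⟫ = ⟪G, (ψ : X)⟫)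
    (hadj : ∀ Φ ∈ domA, ∀ ψ : W, ⟪Badj Φ, (ψ : X)⟫ = ⟪B ψ, Φ⟫)
    (C : Y →L[ℝ] Y) (lmax c : ℝ) (hc : 0 ≤ c)
    (hsa : ∀ x y : Y, ⟪C x, y⟫ = ⟪x, C y⟫)
    (hbound : ∀ y : Y, 0 ≤ ⟪C y, y⟫ ∧ ⟪C y, y⟫ ≤ lmax * ‖y‖ ^ 2)
    (φ : W) (F : X)
    (hsol : ∀ ψ : W, ⟪C (B φ), B ψ⟫ = ⟪F, (ψ : X)⟫)
    (hstab : ‖(φ : X)‖ ≤ c * ‖F‖) :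
    -(C (B φ)) ∈ domA ∧
      ‖-(C (B φ))‖ ^ 2 + ‖Badj (-(C (B φ)))‖ ^ 2 ≤ (1 + lmax * c) * ‖F‖ ^ 2 := by
  set y : Y := B φ with hy
  have hpos : ∀ z : Y, 0 ≤ ⟪C z, z⟫ := fun z => (hbound z).1
  have hinner : ∀ ψ : W, ⟪B ψ, -(C y)⟫ = ⟪-F, (ψ : X)⟫ := by
    intro ψ
    rw [inner_neg_right, inner_neg_left, real_inner_comm, hsol ψ]
  have hmem : -(C y) ∈ domA := (hdom _).2 ⟨-F, hinner⟩
  have hB : Badj (-(C y)) = -F := by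
    refine hW.eq_of_inner_left ℝ fun v hv => ?_
    exact (hadj _ hmem ⟨v, hv⟩).trans (hinner ⟨v, hv⟩)
  constructor
  · exact hmem
  · have hkey : ‖C y‖ ^ 2 ≤ lmax * c * ‖F‖ ^ 2 := by
      rcases le_or_gt 0 lmax with hl | hl
      · have hcs := cs_pos_op C hsa hpos y (C y)
        have hb2 := (hbound (C y)).2
        have hyy : ⟪C y, y⟫ = ⟪F, (φ : X)⟫ := hsol φ
        have hFφ : ⟪F, (φ : X)⟫ ≤ ‖F‖ * ‖(φ : X)‖ := real_inner_le_norm F _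
        have hyy2 : ⟪C y, y⟫ ≤ c * ‖F‖ ^ 2 := by
          rw [hyy]
          calc ⟪F, (φ : X)⟫ ≤ ‖F‖ * ‖(φ : X)‖ := hFφ
            _ ≤ ‖F‖ * (c * ‖F‖) := by
                exact mul_le_mul_of_nonneg_left hstab (norm_nonneg F)
            _ = c * ‖F‖ ^ 2 := by ring
        have hCC : ⟪C y, C y⟫ = ‖C y‖ ^ 2 := real_inner_self_eq_norm_sq _
        have hpy := hpos y
        have hfin : ‖C y‖ ^ 2 * ‖C y‖ ^ 2 ≤ (c * ‖F‖ ^ 2) * (lmax * ‖C y‖ ^ 2) := by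
          calc ‖C y‖ ^ 2 * ‖C y‖ ^ 2 = ⟪C y, C y⟫ ^ 2 := by rw [hCC]; ring
            _ ≤ ⟪C y, y⟫ * ⟪C (C y), C y⟫ := hcs
            _ ≤ (c * ‖F‖ ^ 2) * (lmax * ‖C y‖ ^ 2) := by
                apply mul_le_mul hyy2 hb2 (hpos (C y))
                exact mul_nonneg hc (sq_nonneg ‖F‖)
        nlinarith [hfin, mul_nonneg (mul_nonneg hl hc) (sq_nonneg ‖F‖), sq_nonneg ‖C y‖]
      · -- lmax < 0 forces C = 0 and F = 0
        have hz : ∀ z : Y, ⟪C z, z⟫ = 0 := by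
          intro z
          have h1 := (hbound z).1
          have h2 := (hbound z).2
          nlinarith [sq_nonneg ‖z‖]
        have hCy : C y = 0 := by
          have hcs := cs_pos_op C hsa hpos y (C y)
          rw [hz y, hz (C y)] at hcs
          have : ⟪C y, C y⟫ = 0 := by nlinarith [sq_nonneg ⟪C y, C y⟫]
          exact inner_self_eq_zero.mp this
        have hF : F = 0 := by
          refine hW.eq_zero_of_inner_left ℝ fun v hv => ?_
          exact (hsol ⟨v, hv⟩).symm.trans (by rw [hCy, inner_zero_left])
        rw [hCy, hF]
        simp
    have hF2 : ‖Badj (-(C y))‖ ^ 2 = ‖F‖ ^ 2 := by rw [hB, norm_neg]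
    rw [norm_neg, hF2]
    nlinarith [hkey]
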